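/- arXiv:2512.12878 — 4 statements merged into one kernel-verified Lean document; each statement's English description precedes it below -/
import Mathlib

section
/- Assume N ≥ 2. Then the operator 𝔘 satisfies the trace condition with an explicit bound: for every k ≥ 0 and every y ∈ ℝ^N such that the matrix k·Iₙ + 𝔘*(y) is positive semidefinite, every eigenvalue of 𝔘*(y) is at most (2pN + pN² − 1)·k. In particular, the eigenvalue bound depends only on k (and on the fixed dimensions N, p), and not on y. -/
open Matrix

/-- Index type for the components of the unknown of the noise-free Nash system:
triples `(i,j,l)` with `i,j ∈ {1,…,N}`, `l ∈ {1,…,p}`; `n = pN²`. -/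
abbrev VIdx (N p : ℕ) := Fin N × Fin N × Fin p

/-- Symmetric (as used) `n×n` matrices indexed by the triples. -/
abbrev SymM (N p : ℕ) := Matrix (VIdx N p) (VIdx N p) ℝ

/-- The linear map `𝔘 : Sym(n,ℝ) → ℝ^N`,
`(𝔘A)_i = ½ Σ_l [A_{(i,i,l),(i,i,l)} + Σ_{j≠i} (A_{(j,j,l),(i,j,l)} + A_{(i,j,l),(j,j,l)})]`. -/
noncomputable def mfU (N p : ℕ) (A : SymM N p) (i : Fin N) : ℝ :=
  (1 / 2) * ∑ l : Fin p, (A (i, i, l) (i, i, l)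
    + ∑ j ∈ Finset.univ.filter (fun j => j ≠ i), (A (j, j, l) (i, j, l) + A (i, j, l) (j, j, l)))

/-- `S` is the value at `y` of the adjoint `𝔘* : ℝ^N → Sym(n,ℝ)`: `S` is symmetric and
`⟨𝔘A, y⟩ = ⟨A, S⟩_F` for every symmetric `A`. -/
def IsAdjointU (N p : ℕ) (y : Fin N → ℝ) (S : SymM N p) : Prop :=
  S.IsSymm ∧ ∀ A : SymM N p, A.IsSymm →
    (∑ i, mfU N p A i * y i) = ∑ a, ∑ b, A a b * S a b

noncomputable def Sexp (N p : ℕ) (y : Fin N → ℝ) : SymM N p :=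
  fun a b => (if a = (b.2.1, b.2.1, b.2.2) then y b.1 / 2 else 0)
    + (if b = (a.2.1, a.2.1, a.2.2) ∧ a ≠ b then y a.1 / 2 else 0)

lemma adjoint_Sexp (N p : ℕ) (y : Fin N → ℝ) (A : SymM N p) :
    (∑ i, mfU N p A i * y i) = ∑ a, ∑ b, A a b * Sexp N p y a b := by
  have hsplit : ∑ a, ∑ b, A a b * Sexp N p y a b
      = (∑ a : VIdx N p, ∑ b : VIdx N p,
          A a b * (if a = (b.2.1, b.2.1, b.2.2) then y b.1 / 2 else 0))
        + ∑ a : VIdx N p, ∑ b : VIdx N p,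
          A a b * (if b = (a.2.1, a.2.1, a.2.2) ∧ a ≠ b then y a.1 / 2 else 0) := by
    simp only [Sexp, mul_add, Finset.sum_add_distrib]
  have h1 : ∀ b : VIdx N p,
      (∑ a : VIdx N p, A a b * (if a = (b.2.1, b.2.1, b.2.2) then y b.1 / 2 else 0))
        = A (b.2.1, b.2.1, b.2.2) b * (y b.1 / 2) := by
    intro b
    rw [Finset.sum_eq_single (b.2.1, b.2.1, b.2.2)]
    · simp
    · intro a _ ha; simp [ha]
    · intro h; exact absurd (Finset.mem_univ _) h
  have h2 : ∀ a : VIdx N p,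
      (∑ b : VIdx N p, A a b * (if b = (a.2.1, a.2.1, a.2.2) ∧ a ≠ b then y a.1 / 2 else 0))
        = if a = (a.2.1, a.2.1, a.2.2) then 0 else A a (a.2.1, a.2.1, a.2.2) * (y a.1 / 2) := by
    intro a
    by_cases h : a = (a.2.1, a.2.1, a.2.2)
    · rw [if_pos h]
      apply Finset.sum_eq_zero
      intro b _
      by_cases hb : b = (a.2.1, a.2.1, a.2.2)
      · have : a = b := h.trans hb.symm
        simp [this]
      · simp [hb]
    · rw [if_neg h]
      rw [Finset.sum_eq_single (a.2.1, a.2.1, a.2.2)]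
      · simp [h]
      · intro b _ hb; simp [hb]
      · intro hmem; exact absurd (Finset.mem_univ _) hmem
  rw [hsplit, Finset.sum_comm]
  simp only [h1, h2]
  -- now expand both sides into triple sums
  rw [Fintype.sum_prod_type, Fintype.sum_prod_type]
  simp only [Fintype.sum_prod_type, Prod.mk.injEq, and_true, eq_self_iff_true]
  rw [← Finset.sum_add_distrib]
  apply Finset.sum_congr rfl
  intro i _
  have e2 : (∑ j : Fin N, ∑ l : Fin p, (if i = j then (0:ℝ) else A (i,j,l) (j,j,l) * (y i/2)))
      = ∑ j ∈ Finset.univ.erase i, ∑ l : Fin p, A (i,j,l) (j,j,l) * (y i/2) := by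
    rw [← Finset.sum_erase (s := Finset.univ) (a := i)
      (f := fun j => ∑ l : Fin p, (if i = j then (0:ℝ) else A (i,j,l) (j,j,l) * (y i/2)))
      (by simp)]
    apply Finset.sum_congr rfl
    intro j hj
    apply Finset.sum_congr rfl
    intro l _
    rw [if_neg (Ne.symm (Finset.ne_of_mem_erase hj))]
  have e3 : (∑ j : Fin N, ∑ l : Fin p, A (j,j,l) (i,j,l) * (y i/2))
      = (∑ l : Fin p, A (i,i,l) (i,i,l) * (y i/2))
        + ∑ j ∈ Finset.univ.erase i, ∑ l : Fin p, A (j,j,l) (i,j,l) * (y i/2) :=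
    (Finset.add_sum_erase _ _ (Finset.mem_univ i)).symm
  rw [e2, e3, mfU, Finset.filter_ne']
  simp only [Finset.sum_add_distrib, mul_add, add_mul, Finset.mul_sum, Finset.sum_mul]
  rw [Finset.sum_comm]
  rw [Finset.sum_comm (s := (Finset.univ : Finset (Fin p))) (t := Finset.univ.erase i)]
  rw [← add_assoc]
  congr 1
  congr 1
  · exact Finset.sum_congr rfl fun l _ => by ring
  · exact Finset.sum_congr rfl fun j _ => Finset.sum_congr rfl fun l _ => by ring
  · exact Finset.sum_congr rfl fun j _ => Finset.sum_congr rfl fun l _ => by ring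

lemma Sexp_symm (N p : ℕ) (y : Fin N → ℝ) : (Sexp N p y).IsSymm := by
  rw [Matrix.IsSymm]
  ext a b
  simp only [Matrix.transpose_apply, Sexp]
  by_cases hab : a = b
  · subst hab; rfl
  · have hba : b ≠ a := Ne.symm hab
    simp only [hab, hba, ne_eq, not_false_iff, and_true]
    exact add_comm _ _

lemma pair_sum (N p : ℕ) (M : SymM N p) (hM : M.IsSymm) (a b : VIdx N p) :
    (∑ c : VIdx N p, ∑ d : VIdx N p,
      ((if c = a ∧ d = b then (1:ℝ) else 0) + (if c = b ∧ d = a then (1:ℝ) else 0)) * M c d)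
      = 2 * M a b := by
  have hba : M b a = M a b := by
    conv_lhs => rw [← hM]
    rfl
  simp only [add_mul, ite_mul, one_mul, zero_mul, Finset.sum_add_distrib]
  rw [show (∑ c : VIdx N p, ∑ d : VIdx N p, if c = a ∧ d = b then M c d else 0) = M a b from ?_,
      show (∑ c : VIdx N p, ∑ d : VIdx N p, if c = b ∧ d = a then M c d else 0) = M b a from ?_]
  · rw [hba]; ring
  · simp [ite_and, Finset.sum_ite_eq']
  · simp [ite_and, Finset.sum_ite_eq']

lemma eq_Sexp (N p : ℕ) (y : Fin N → ℝ) (S : SymM N p) (hS : IsAdjointU N p y S) :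
    S = Sexp N p y := by
  ext a b
  set A : SymM N p := fun c d =>
    (if c = a ∧ d = b then (1:ℝ) else 0) + (if c = b ∧ d = a then (1:ℝ) else 0) with hAdef
  have hA : A.IsSymm := by
    rw [Matrix.IsSymm]
    ext c d
    rw [Matrix.transpose_apply]
    simp only [hAdef]
    rw [add_comm]
    congr 1 <;> simp [and_comm]
  have key : (2:ℝ) * S a b = 2 * Sexp N p y a b := by
    rw [← pair_sum N p S hS.1 a b, ← pair_sum N p (Sexp N p y) (Sexp_symm N p y) a b]
    rw [← hS.2 A hA, adjoint_Sexp]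
  linarith

lemma quadform {m : Type*} [Fintype m] [DecidableEq m] (M : Matrix m m ℝ) (hM : M.PosSemidef)
    (a b : m) (t : ℝ) :
    0 ≤ M a a * (t * t) + (M a b + M b a) * t + M b b := by
  have h := hM.dotProduct_mulVec_nonneg (t • (Pi.single a (1:ℝ) : m → ℝ) + (Pi.single b (1:ℝ) : m → ℝ))
  simp only [star_trivial, Matrix.mulVec_add, Matrix.mulVec_smul, Matrix.mulVec_single,
    add_dotProduct, smul_dotProduct, dotProduct_add,
    single_dotProduct, smul_eq_mul, Pi.add_apply, Pi.smul_apply, mul_one, MulOpposite.op_one, one_smul, Matrix.col_apply, one_mul] at h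
  nlinarith [h]

lemma entry_ab (N p : ℕ) (y : Fin N → ℝ) (k : ℝ) (i j : Fin N) (l : Fin p) (hij : i ≠ j) :
    (k • (1 : SymM N p) + Sexp N p y) (i,j,l) (j,j,l) = y i / 2 := by
  have h1 : ((i,j,l) : VIdx N p) ≠ (j,j,l) := by simp [Prod.ext_iff, hij]
  simp [Matrix.add_apply, Matrix.smul_apply, Matrix.one_apply, Sexp, Prod.ext_iff, hij, h1]

lemma entry_ba (N p : ℕ) (y : Fin N → ℝ) (k : ℝ) (i j : Fin N) (l : Fin p) (hij : i ≠ j) :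
    (k • (1 : SymM N p) + Sexp N p y) (j,j,l) (i,j,l) = y i / 2 := by
  have h1 : ((j,j,l) : VIdx N p) ≠ (i,j,l) := by simp [Prod.ext_iff, Ne.symm hij]
  simp [Matrix.add_apply, Matrix.smul_apply, Matrix.one_apply, Sexp, Prod.ext_iff, hij, Ne.symm hij, h1]

lemma entry_aa (N p : ℕ) (y : Fin N → ℝ) (k : ℝ) (i j : Fin N) (l : Fin p) (hij : i ≠ j) :
    (k • (1 : SymM N p) + Sexp N p y) (i,j,l) (i,j,l) = k := by
  simp [Matrix.add_apply, Matrix.smul_apply, Matrix.one_apply, Sexp, Prod.ext_iff, hij]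

lemma entry_bb (N p : ℕ) (y : Fin N → ℝ) (k : ℝ) (j : Fin N) (l : Fin p) :
    (k • (1 : SymM N p) + Sexp N p y) (j,j,l) (j,j,l) = k + y j / 2 := by
  simp [Matrix.add_apply, Matrix.smul_apply, Matrix.one_apply, Sexp, Prod.ext_iff]

lemma exists_ne_fin (N : ℕ) (hN : 2 ≤ N) (j : Fin N) : ∃ i, i ≠ j := by
  by_cases h : j = ⟨0, by omega⟩
  · exact ⟨⟨1, by omega⟩, by simp [h, Fin.ext_iff]⟩
  · exact ⟨⟨0, by omega⟩, fun hc => h hc.symm⟩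

lemma y_bounds (N p : ℕ) (hN : 2 ≤ N) (hp : 1 ≤ p) (k : ℝ) (hk : 0 ≤ k) (y : Fin N → ℝ)
    (hpsd : (k • (1 : SymM N p) + Sexp N p y).PosSemidef) : ∀ i, |y i| ≤ 4*k := by
  set l0 : Fin p := ⟨0, hp⟩ with hl0
  have hq : ∀ i j : Fin N, i ≠ j → (y i)^2 ≤ 4*k^2 + 2*k*(y j) := by
    intro i j hij
    have hd := discrim_le_zero (a := k) (b := y i) (c := k + y j / 2) ?_
    · rw [discrim] at hd; nlinarith [hd]
    · intro t
      have h := quadform _ hpsd ((i,j,l0) : VIdx N p) ((j,j,l0) : VIdx N p) t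
      rw [entry_aa _ _ _ _ _ _ _ hij, entry_ab _ _ _ _ _ _ _ hij,
        entry_ba _ _ _ _ _ _ _ hij, entry_bb] at h
      nlinarith [h]
  have hlb : ∀ j, -(2*k) ≤ y j := by
    intro j
    obtain ⟨i, hij⟩ := exists_ne_fin N hN j
    have h := quadform _ hpsd ((i,j,l0) : VIdx N p) ((j,j,l0) : VIdx N p) 0
    rw [entry_aa _ _ _ _ _ _ _ hij, entry_ab _ _ _ _ _ _ _ hij,
      entry_ba _ _ _ _ _ _ _ hij, entry_bb] at h
    nlinarith [h]
  have hub : ∀ i, y i ≤ 4*k := by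
    obtain ⟨m, -, hm⟩ := Finset.exists_max_image Finset.univ y ⟨⟨0, by omega⟩, Finset.mem_univ _⟩
    have hmb : y m ≤ 4*k := by
      obtain ⟨j, hjm⟩ := exists_ne_fin N hN m
      have h1 := hq m j (Ne.symm hjm)
      nlinarith [hm j (Finset.mem_univ j), sq_nonneg (y m - 4*k), sq_nonneg (y m + 2*k), sq_nonneg k]
    intro i
    exact le_trans (hm i (Finset.mem_univ i)) hmb
  intro i
  rw [abs_le]
  exact ⟨by linarith [hlb i], hub i⟩

lemma rowsum (N p : ℕ) (k : ℝ) (hk : 0 ≤ k) (y : Fin N → ℝ) (hy : ∀ i, |y i| ≤ 4*k)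
    (a : VIdx N p) : ∑ b : VIdx N p, |Sexp N p y a b| ≤ 2*N*k + 2*k := by
  have habs2 : ∀ i : Fin N, |y i / 2| ≤ 2*k := by
    intro i
    rw [abs_div, abs_two]
    linarith [hy i]
  have hstep : ∀ b : VIdx N p, |Sexp N p y a b| ≤
      (if a = (b.2.1, b.2.1, b.2.2) then 2*k else 0)
        + (if b = (a.2.1, a.2.1, a.2.2) then 2*k else 0) := by
    intro b
    refine (abs_add_le _ _).trans (add_le_add ?_ ?_)
    · split
      · exact habs2 b.1
      · rw [abs_zero]

    · by_cases hc : b = (a.2.1, a.2.1, a.2.2)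
      · rw [if_pos hc]
        by_cases hab : a = b
        · rw [if_neg (fun h : _ ∧ a ≠ b => h.2 hab), abs_zero]
          linarith
        · rw [if_pos ⟨hc, hab⟩]
          exact habs2 a.1
      · rw [if_neg hc, if_neg (fun h => hc h.1), abs_zero]
  calc ∑ b : VIdx N p, |Sexp N p y a b|
      ≤ ∑ b : VIdx N p, ((if a = (b.2.1, b.2.1, b.2.2) then 2*k else 0)
        + (if b = (a.2.1, a.2.1, a.2.2) then 2*k else 0)) :=
        Finset.sum_le_sum (fun b _ => hstep b)
    _ = (∑ b : VIdx N p, if a = (b.2.1, b.2.1, b.2.2) then 2*k else 0)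
        + ∑ b : VIdx N p, (if b = (a.2.1, a.2.1, a.2.2) then 2*k else 0) :=
        Finset.sum_add_distrib
    _ ≤ 2*N*k + 2*k := by
        gcongr
        · -- first sum: card of matching b is ≤ N
          rw [← Finset.sum_filter]
          rw [Finset.sum_const, nsmul_eq_mul]
          have hcard : (Finset.univ.filter
              (fun b : VIdx N p => a = (b.2.1, b.2.1, b.2.2))).card ≤ N := by
            have := Finset.card_le_card_of_injOn
              (s := Finset.univ.filter (fun b : VIdx N p => a = (b.2.1, b.2.1, b.2.2)))
              (t := (Finset.univ : Finset (Fin N)))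
              (fun b : VIdx N p => b.1)
              (fun b _ => Finset.mem_univ _) ?_
            · simpa using this
            · intro b hb b' hb' h1
              simp only [Finset.coe_filter, Finset.mem_univ, true_and, Set.mem_setOf_eq] at hb hb'
              obtain ⟨b1, b2, b3⟩ := b
              obtain ⟨b1', b2', b3'⟩ := b'
              have h2 := hb.symm.trans hb'
              simp only [Prod.mk.injEq] at h2 h1 ⊢
              exact ⟨h1, h2.1, h2.2.2⟩
          calc ((Finset.univ.filter
              (fun b : VIdx N p => a = (b.2.1, b.2.1, b.2.2))).card : ℝ) * (2*k)
              ≤ (N : ℝ) * (2*k) := by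
                have : (0:ℝ) ≤ 2*k := by linarith
                exact mul_le_mul_of_nonneg_right (by exact_mod_cast hcard) this
            _ = 2*N*k := by ring
        · rw [Finset.sum_ite_eq' Finset.univ ((a.2.1, a.2.1, a.2.2) : VIdx N p)]
          simp


/-- for `N ≥ 2`, `𝔘` satisfies the trace condition with an explicit bound:
if `k ≥ 0` and `k·Iₙ + 𝔘*(y)` is positive semidefinite, then every eigenvalue of `𝔘*(y)`
is at most `(2pN + pN² − 1)·k`, a bound independent of `y`. -/
theorem stmt2 (N p : ℕ) (hN : 2 ≤ N) (hp : 1 ≤ p) (k : ℝ) (hk : 0 ≤ k)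
    (y : Fin N → ℝ) (S : SymM N p) (hS : IsAdjointU N p y S)
    (hpsd : (k • (1 : SymM N p) + S).PosSemidef) :
    ∀ (μ : ℝ) (w : VIdx N p → ℝ), w ≠ 0 → S.mulVec w = μ • w →
      μ ≤ (2 * (p : ℝ) * (N : ℝ) + (p : ℝ) * (N : ℝ) ^ 2 - 1) * k := by
  intro μ w hw hev
  have hSe : S = Sexp N p y := eq_Sexp N p y S hS
  subst hSe
  have hy := y_bounds N p hN hp k hk y hpsd
  have hne : (Finset.univ : Finset (VIdx N p)).Nonempty :=
    ⟨(⟨0, by omega⟩, ⟨0, by omega⟩, ⟨0, by omega⟩), Finset.mem_univ _⟩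
  obtain ⟨a, -, ha⟩ := Finset.exists_max_image Finset.univ (fun c => |w c|) hne
  have hwa : 0 < |w a| := by
    rcases (abs_nonneg (w a)).lt_or_eq with h | h
    · exact h
    · exfalso
      apply hw
      funext c
      have hc := ha c (Finset.mem_univ c)
      rw [← h] at hc
      exact abs_eq_zero.1 (le_antisymm hc (abs_nonneg _))
  have heva : μ * w a = ∑ b, Sexp N p y a b * w b := by
    have h := congrFun hev a
    simpa [Matrix.mulVec, dotProduct] using h.symm
  have habsineq : |μ| * |w a| ≤ (∑ b : VIdx N p, |Sexp N p y a b|) * |w a| := by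
    rw [← abs_mul, heva]
    calc |∑ b : VIdx N p, Sexp N p y a b * w b|
        ≤ ∑ b : VIdx N p, |Sexp N p y a b * w b| := Finset.abs_sum_le_sum_abs _ _
      _ = ∑ b : VIdx N p, |Sexp N p y a b| * |w b| := by simp [abs_mul]
      _ ≤ ∑ b : VIdx N p, |Sexp N p y a b| * |w a| :=
          Finset.sum_le_sum (fun b _ =>
            mul_le_mul_of_nonneg_left (ha b (Finset.mem_univ b)) (abs_nonneg _))
      _ = (∑ b : VIdx N p, |Sexp N p y a b|) * |w a| := (Finset.sum_mul _ _ _).symm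
  have hmu : |μ| ≤ 2*N*k + 2*k := by
    have hrow := rowsum N p k hk y hy a
    have h2 : |μ| * |w a| ≤ (2*N*k + 2*k) * |w a| :=
      le_trans habsineq (mul_le_mul_of_nonneg_right hrow (abs_nonneg _))
    exact le_of_mul_le_mul_right h2 hwa
  have hp' : (1:ℝ) ≤ p := by exact_mod_cast hp
  have hN' : (2:ℝ) ≤ N := by exact_mod_cast hN
  have hcoef : (2:ℝ)*N + 2 ≤ 2*p*N + p*N^2 - 1 := by
    nlinarith [mul_nonneg (sub_nonneg.2 hp') (by linarith : (0:ℝ) ≤ (N:ℝ)),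
      mul_nonneg (sub_nonneg.2 hp') (sq_nonneg (N:ℝ)), sq_nonneg ((N:ℝ) - 2)]
  calc μ ≤ |μ| := le_abs_self μ
    _ ≤ 2*N*k + 2*k := hmu
    _ = (2*N + 2) * k := by ring
    _ ≤ (2 * (p : ℝ) * (N : ℝ) + (p : ℝ) * (N : ℝ) ^ 2 - 1) * k :=
        mul_le_mul_of_nonneg_right hcoef hk
end

section
/- Let N ≥ 2 be an integer, k ≥ 0, and y ∈ ℝ^N satisfy (y_j)² ≤ 4k² + 2k·y_i for every pair of distinct indices i ≠ j in {1,…,N}. Then max_i y_i ≤ (1+√5)·k, and consequently Σ_{i=1}^N y_i ≤ (1+√5)·k·N. -/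
/-- If `N ≥ 2`, `k ≥ 0` and `(y j)² ≤ 4k² + 2k·y i` for all pairs of distinct
indices, then every component of `y` (in particular the maximal one) is at most `(1+√5)·k`,
and consequently `Σ i, y i ≤ (1+√5)·k·N`. -/
theorem stmt6 (N : ℕ) (hN : 2 ≤ N) (k : ℝ) (hk : 0 ≤ k) (y : Fin N → ℝ)
    (h : ∀ i j : Fin N, i ≠ j → (y j) ^ 2 ≤ 4 * k ^ 2 + 2 * k * y i) :
    (∀ i, y i ≤ (1 + Real.sqrt 5) * k) ∧
    (∑ i, y i ≤ (1 + Real.sqrt 5) * k * N) := by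
  have h0 : (0 : ℕ) < N := by omega
  have h1 : (1 : ℕ) < N := by omega
  haveI : Nonempty (Fin N) := ⟨⟨0, h0⟩⟩
  obtain ⟨m, hm⟩ := Finite.exists_max y
  have hi : ∃ i : Fin N, i ≠ m := by
    by_cases hc : m = ⟨0, h0⟩
    · exact ⟨⟨1, h1⟩, by simp [hc, Fin.ext_iff]⟩
    · exact ⟨⟨0, h0⟩, fun e => hc e.symm⟩
  obtain ⟨i, hne⟩ := hi
  have hs : Real.sqrt 5 ^ 2 = 5 := Real.sq_sqrt (by norm_num)
  have hsn : 0 ≤ Real.sqrt 5 := Real.sqrt_nonneg 5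
  have key : y m ≤ (1 + Real.sqrt 5) * k := by
    nlinarith [h i m hne, mul_le_mul_of_nonneg_left (hm i) hk, hs, hsn, mul_nonneg hsn hk]
  have hall : ∀ j, y j ≤ (1 + Real.sqrt 5) * k := fun j => le_trans (hm j) key
  refine ⟨hall, ?_⟩
  calc ∑ i, y i ≤ ∑ _i : Fin N, (1 + Real.sqrt 5) * k :=
        Finset.sum_le_sum fun j _ => hall j
    _ = (1 + Real.sqrt 5) * k * N := by
        simp [Finset.sum_const]
        ring
end

section
/- Let c̃ > 0, c̃ ≠ 1, and let d̃ : [0,S] → ℝ (S > 0) be differentiable with d̃(0) = −1, d̃(s) ≠ 0 and |d̃(s)| ≠ c̃ for all s ∈ [0,S], and d̃'(s) = (d̃(s)² − c̃²)/(2 d̃(s)²) for all s ∈ [0,S]. Then for every s ∈ [0,S]: 2 d̃(s) + c̃ · ln |(c̃ − d̃(s))/(c̃ + d̃(s))| = s − 2 + c̃ · ln |(c̃ + 1)/(c̃ − 1)|. -/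
/-- explicit first integral of the ODE `d̃' = (d̃² − c̃²)/(2d̃²)` with
`d̃(0) = −1`, for `c̃ > 0`, `c̃ ≠ 1`, as long as `d̃ ≠ 0` and `|d̃| ≠ c̃` on `[0,S]`:
`2d̃(s) + c̃ ln|(c̃−d̃(s))/(c̃+d̃(s))| = s − 2 + c̃ ln|(c̃+1)/(c̃−1)|`. -/
theorem stmt16 (ct : ℝ) (hct : 0 < ct) (hct1 : ct ≠ 1) (S : ℝ) (hS : 0 < S)
    (dt : ℝ → ℝ) (h0 : dt 0 = -1)
    (hne : ∀ s ∈ Set.Icc 0 S, dt s ≠ 0 ∧ |dt s| ≠ ct)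
    (hderiv : ∀ s ∈ Set.Icc 0 S,
      HasDerivAt dt (((dt s) ^ 2 - ct ^ 2) / (2 * (dt s) ^ 2)) s) :
    ∀ s ∈ Set.Icc 0 S,
      2 * dt s + ct * Real.log |(ct - dt s) / (ct + dt s)|
        = s - 2 + ct * Real.log |(ct + 1) / (ct - 1)| := by
  have hne0 : ∀ t ∈ Set.Icc (0:ℝ) S, ct - dt t ≠ 0 ∧ ct + dt t ≠ 0 := by
    intro t ht
    obtain ⟨h1, h2⟩ := hne t ht
    constructor
    · intro h; apply h2; rw [abs_eq hct.le]; left; linarith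
    · intro h; apply h2; rw [abs_eq hct.le]; right; linarith
  set g : ℝ → ℝ := fun t =>
    2 * dt t + ct * (Real.log (ct - dt t) - Real.log (ct + dt t)) - t with hg_def
  have hg : ∀ t ∈ Set.Icc (0:ℝ) S, HasDerivAt g 0 t := by
    intro t ht
    obtain ⟨hd0, _⟩ := hne t ht
    obtain ⟨ha, hb⟩ := hne0 t ht
    have hD := hderiv t ht
    set D := ((dt t) ^ 2 - ct ^ 2) / (2 * (dt t) ^ 2) with hDdef
    have h1 : HasDerivAt (fun u => Real.log (ct - dt u)) (-D / (ct - dt t)) t := by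
      simpa using (hD.const_sub ct).log ha
    have h2 : HasDerivAt (fun u => Real.log (ct + dt u)) (D / (ct + dt t)) t := by
      simpa using (hD.const_add ct).log hb
    have H := ((hD.const_mul (2:ℝ)).add ((h1.sub h2).const_mul ct)).sub (hasDerivAt_id t)
    have hval : 2 * D + ct * (-D / (ct - dt t) - D / (ct + dt t)) - 1 = 0 := by
      have hd2 : (dt t) ^ 2 ≠ 0 := pow_ne_zero _ hd0
      rw [hDdef]
      field_simp
      ring
    have H' : HasDerivAt g (2 * D + ct * (-D / (ct - dt t) - D / (ct + dt t)) - 1) t := H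
    rw [hval] at H'
    exact H'
  have hcont : ContinuousOn g (Set.Icc 0 S) := fun t ht =>
    (hg t ht).continuousAt.continuousWithinAt
  have key := constant_of_has_deriv_right_zero hcont
    (fun t ht => (hg t (Set.mem_Icc_of_Ico ht)).hasDerivWithinAt)
  intro s hs
  have hks := key s hs
  have ha1 : ct + 1 ≠ 0 := by linarith
  have hb1 : ct - 1 ≠ 0 := sub_ne_zero.mpr hct1
  obtain ⟨ha, hb⟩ := hne0 s hs
  rw [Real.log_abs, Real.log_abs, Real.log_div ha hb, Real.log_div ha1 hb1]
  simp only [hg_def, h0, sub_neg_eq_add] at hks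
  have : ct + -1 = ct - 1 := by ring
  rw [this] at hks
  linarith [hks]
end

section
/- Let c > −½, and let (v_k)_{k≥1} and (d_k)_{k≥1} be real sequences with v₁ = 0, d_k ∈ (−½, 0) for all k ≥ 1, and v_{k+1} = (c − v_k + d_k)/(2 d_k − 1) + c for all k ≥ 1. Then for every k ≥ 1: c + ½ − v_k ≥ 2^{1−k} (c + ½) > 0. -/
/-- for `c > −½`, the base-state sequence `v₁ = 0`,
`v_{k+1} = (c − v_k + d_k)/(2d_k − 1) + c` with `d_k ∈ (−½,0)` satisfies
`c + ½ − v_k ≥ 2^{1−k}(c + ½) > 0` for all `k ≥ 1`. -/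
theorem stmt18 (c : ℝ) (hc : -(1 / 2) < c) (v d : ℕ → ℝ) (hv1 : v 1 = 0)
    (hd : ∀ k : ℕ, 1 ≤ k → d k ∈ Set.Ioo (-(1 / 2) : ℝ) 0)
    (hrec : ∀ k : ℕ, 1 ≤ k → v (k + 1) = (c - v k + d k) / (2 * d k - 1) + c) :
    ∀ k : ℕ, 1 ≤ k →
      (2 : ℝ) ^ ((1 : ℤ) - (k : ℤ)) * (c + 1 / 2) ≤ c + 1 / 2 - v k ∧
      0 < (2 : ℝ) ^ ((1 : ℤ) - (k : ℤ)) * (c + 1 / 2) := by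
  have hcpos : 0 < c + 1 / 2 := by linarith
  intro k hk
  induction k, hk using Nat.le_induction with
  | base =>
      constructor
      · simp [hv1]
      · positivity
  | succ k hk ih =>
      obtain ⟨ih1, _⟩ := ih
      obtain ⟨hd1, hd2⟩ := hd k hk
      have hne : 2 * d k - 1 ≠ 0 := by nlinarith
      have key : c + 1 / 2 - v (k + 1) = (c + 1 / 2 - v k) / (1 - 2 * d k) := by
        have hne2 : (1:ℝ) - 2 * d k ≠ 0 := by nlinarith
        rw [hrec k hk]
        field_simp
        ring
      have h12 : (1 : ℝ) < 1 - 2 * d k := by linarith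
      have h22 : 1 - 2 * d k < 2 := by linarith
      have hwk : 0 < c + 1 / 2 - v k := by
        calc (0:ℝ) < (2 : ℝ) ^ ((1 : ℤ) - (k : ℤ)) * (c + 1 / 2) := by positivity
        _ ≤ _ := ih1
      constructor
      · rw [key]
        have hhalf : (2 : ℝ) ^ ((1 : ℤ) - ((k : ℤ) + 1)) * (c + 1 / 2)
            = ((2 : ℝ) ^ ((1 : ℤ) - (k : ℤ)) * (c + 1 / 2)) / 2 := by
          rw [eq_div_iff (by norm_num : (2:ℝ) ≠ 0)]
          rw [mul_right_comm, ← zpow_add_one₀ (by norm_num : (2:ℝ) ≠ 0)]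
          ring_nf
        push_cast
        rw [hhalf]
        have h1 : (c + 1 / 2 - v k) / 2 ≤ (c + 1 / 2 - v k) / (1 - 2 * d k) :=
          div_le_div_of_nonneg_left hwk.le (by linarith) h22.le
        have h2 : ((2 : ℝ) ^ ((1 : ℤ) - (k : ℤ)) * (c + 1 / 2)) / 2
            ≤ (c + 1 / 2 - v k) / 2 := by linarith
        linarith
      · positivity
end
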